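/- Let w ~ N(0,1), ξ ~ N(0,σ²) independent, with σ ≥ C for a sufficiently large absolute constant C, and 0 ≤ h ≤ log σ. Then |E[w·r(wh+ξ)] − h/2| ≤ C'·(log σ)⁴/σ³ for some absolute constant C'. -/

import Mathlib

open MeasureTheory ProbabilityTheory Real
open scoped NNReal ENNReal

namespace Stmt2Aux

lemma gauss_eq_wd {v : ℝ≥0} (hv : v ≠ 0) :
    gaussianReal 0 v
      = volume.withDensity (fun x => ((Real.toNNReal (gaussianPDFReal 0 v x) : ℝ≥0) : ℝ≥0∞)) := by
  rw [gaussianReal_of_var_ne_zero 0 hv]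
  rfl

lemma integral_gauss_eq {v : ℝ≥0} (hv : v ≠ 0) (g : ℝ → ℝ) :
    ∫ x, g x ∂(gaussianReal 0 v) = ∫ x, gaussianPDFReal 0 v x * g x := by
  rw [gauss_eq_wd hv,
    integral_withDensity_eq_integral_smul ((measurable_gaussianPDFReal 0 v).real_toNNReal) g]
  congr 1
  ext x
  rw [NNReal.smul_def, smul_eq_mul, Real.coe_toNNReal _ (gaussianPDFReal_nonneg _ _ _)]

lemma integrable_gauss_of {v : ℝ≥0} (hv : v ≠ 0) {g : ℝ → ℝ}
    (hg : Integrable (fun x => gaussianPDFReal 0 v x * g x) volume) :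
    Integrable g (gaussianReal 0 v) := by
  rw [gauss_eq_wd hv,
    integrable_withDensity_iff_integrable_smul₀
      ((measurable_gaussianPDFReal 0 v).real_toNNReal.aemeasurable)]
  refine hg.congr (Filter.Eventually.of_forall fun x => ?_)
  show gaussianPDFReal 0 v x * g x = (gaussianPDFReal 0 v x).toNNReal • g x
  rw [NNReal.smul_def, smul_eq_mul, Real.coe_toNNReal _ (gaussianPDFReal_nonneg _ _ _)]

lemma integrable_abs_pow_exp {b : ℝ} (hb : 0 < b) (n : ℕ) :
    Integrable (fun x : ℝ => |x| ^ n * rexp (-b * x ^ 2)) volume := by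
  have base : Integrable (fun x : ℝ => x ^ (n : ℝ) * rexp (-b * x ^ 2)) volume :=
    integrable_rpow_mul_exp_neg_mul_sq hb
      (lt_of_lt_of_le neg_one_lt_zero (Nat.cast_nonneg n))
  have := base.abs
  refine this.congr (Filter.Eventually.of_forall fun x => ?_)
  simp [abs_mul, abs_pow, Real.abs_exp, Real.rpow_natCast]

lemma integrable_abs_pow_gauss {v : ℝ≥0} (hv : v ≠ 0) (n : ℕ) :
    Integrable (fun x => |x| ^ n) (gaussianReal 0 v) := by
  apply integrable_gauss_of hv
  have hvpos : (0:ℝ) < (v:ℝ) := by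
    have := hv
    positivity
  have hb : (0:ℝ) < ((2:ℝ) * v)⁻¹ := by positivity
  have base := (integrable_abs_pow_exp hb n).const_mul (√(2 * π * (v:ℝ)))⁻¹
  refine base.congr (Filter.Eventually.of_forall fun x => ?_)
  simp only [gaussianPDFReal, sub_zero]
  rw [show -x ^ 2 / (2 * (v:ℝ)) = -((2:ℝ) * (v:ℝ))⁻¹ * x ^ 2 by ring]
  ring

lemma map_neg_gauss (v : ℝ≥0) :
    Measure.map (fun x : ℝ => -x) (gaussianReal 0 v) = gaussianReal 0 v := by
  have h1 : (NNReal.mk ((-1:ℝ)^2) (sq_nonneg _) : ℝ≥0) = 1 := by ext; norm_num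
  have h := gaussianReal_map_const_mul (μ := 0) (v := v) (-1)
  rw [h1, one_mul, mul_zero] at h
  rw [← h]
  congr 1
  ext x
  simp

lemma first_moment_gauss (v : ℝ≥0) : ∫ x, x ∂(gaussianReal 0 v) = 0 := by
  have h : ∫ x, x ∂(gaussianReal 0 v) = ∫ x, -x ∂(gaussianReal 0 v) := by
    conv_lhs => rw [← map_neg_gauss v]
    exact integral_map measurable_neg.aemeasurable measurable_id.aestronglyMeasurable
  rw [integral_neg] at h
  linarith

lemma integral_sq_exp : ∫ x : ℝ, x ^ 2 * rexp (-(2⁻¹:ℝ) * x ^ 2) = √(2 * π) := by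
  have hb : (0:ℝ) < (2⁻¹:ℝ) := by norm_num
  set f : ℝ → ℝ := fun x => x ^ 2 * rexp (-(2⁻¹:ℝ) * x ^ 2) with hf
  have hfi : Integrable f volume := by
    have := integrable_abs_pow_exp hb 2
    refine this.congr (Filter.Eventually.of_forall fun x => ?_)
    simp [f, sq_abs]
  have heven : ∀ x, f (-x) = f x := by intro x; simp [f]
  have hIoi : ∫ x in Set.Ioi (0:ℝ), f x = √(2 * π) / 2 := by
    have key := integral_rpow_mul_exp_neg_mul_rpow (p := 2) (q := 2) (b := 2⁻¹)
      (by norm_num) (by norm_num) (by norm_num)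
    have hcong : ∫ x in Set.Ioi (0:ℝ), f x
        = ∫ x in Set.Ioi (0:ℝ), x ^ (2:ℝ) * rexp (-(2⁻¹:ℝ) * x ^ (2:ℝ)) := by
      refine (setIntegral_congr_fun measurableSet_Ioi (fun x hx => ?_)).symm
      rw [show ((2:ℝ)) = ((2:ℕ):ℝ) by norm_num, Real.rpow_natCast]
      simp [f]
    rw [hcong, key]
    have hG : Real.Gamma ((2 + 1) / 2) = √π / 2 := by
      rw [show ((2:ℝ) + 1) / 2 = 1/2 + 1 by norm_num, Real.Gamma_add_one (by norm_num)]
      rw [Real.Gamma_one_half_eq]; ring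
    have hpow : ((2:ℝ)⁻¹) ^ (-((2:ℝ) + 1) / 2) = 2 * √2 := by
      rw [show (-((2:ℝ) + 1) / 2) = -(3/2 : ℝ) by norm_num]
      rw [Real.inv_rpow (by norm_num : (0:ℝ) ≤ 2), ← Real.rpow_neg (by norm_num : (0:ℝ) ≤ 2),
        neg_neg]
      rw [show (3/2 : ℝ) = (3:ℝ) * (1/2) by norm_num,
        Real.rpow_mul (by norm_num : (0:ℝ) ≤ 2)]
      rw [show ((2:ℝ) ^ (3:ℝ)) = 8 by
        rw [show (3:ℝ) = ((3:ℕ):ℝ) by norm_num, Real.rpow_natCast]; norm_num]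
      rw [show ((1:ℝ)/2) = 2⁻¹ by norm_num]
      rw [show ((2:ℝ)⁻¹) = (1:ℝ)/2 by norm_num, ← Real.sqrt_eq_rpow]
      rw [show (8:ℝ) = 4 * 2 by norm_num, Real.sqrt_mul (by norm_num : (0:ℝ) ≤ 4),
        show (4:ℝ) = 2 ^ 2 by norm_num, Real.sqrt_sq (by norm_num : (0:ℝ) ≤ 2)]
    rw [hG, hpow, Real.sqrt_mul (by norm_num : (0:ℝ) ≤ 2)]
    ring
  have hIic : ∫ x in Set.Iic (0:ℝ), f x = √(2 * π) / 2 := by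
    calc ∫ x in Set.Iic (0:ℝ), f x = ∫ x in Set.Iic (0:ℝ), f (-x) := by
          exact setIntegral_congr_fun measurableSet_Iic fun x _ => (heven x).symm
      _ = ∫ x in Set.Ioi (-(0:ℝ)), f x := integral_comp_neg_Iic 0 f
      _ = ∫ x in Set.Ioi (0:ℝ), f x := by norm_num
      _ = √(2 * π) / 2 := hIoi
  calc ∫ x, f x = (∫ x in Set.Iic (0:ℝ), f x) + ∫ x in Set.Ioi (0:ℝ), f x :=
        (intervalIntegral.integral_Iic_add_Ioi hfi.integrableOn hfi.integrableOn).symm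
    _ = √(2 * π) := by rw [hIic, hIoi]; ring

lemma second_moment_gauss : ∫ x, x ^ 2 ∂(gaussianReal 0 (1:ℝ≥0)) = 1 := by
  rw [integral_gauss_eq one_ne_zero]
  have hpt : ∀ x : ℝ, gaussianPDFReal 0 1 x * x ^ 2
      = (√(2 * π))⁻¹ * (x ^ 2 * rexp (-(2⁻¹:ℝ) * x ^ 2)) := by
    intro x
    simp only [gaussianPDFReal, NNReal.coe_one, mul_one, sub_zero]
    rw [show -x ^ 2 / (2:ℝ) = -(2⁻¹:ℝ) * x ^ 2 by ring]
    ring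
  simp_rw [hpt]
  rw [integral_const_mul, integral_sq_exp]
  exact inv_mul_cancel₀ (by positivity)

end Stmt2Aux

open Stmt2Aux in
theorem stmt2 :
    ∃ C C' : ℝ, 0 < C ∧ 0 < C' ∧
      ∀ (σ h : ℝ), C ≤ σ → 0 ≤ h → h ≤ Real.log σ →
      ∀ (Ω : Type) (_ : MeasureSpace Ω) (_ : IsProbabilityMeasure (ℙ : Measure Ω))
        (w ξ : Ω → ℝ),
        Measure.map w ℙ = gaussianReal 0 1 →
        Measure.map ξ ℙ = gaussianReal 0 (Real.toNNReal (σ ^ 2)) →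
        IndepFun w ξ ℙ →
        |(∫ ω, w ω * max (w ω * h + ξ ω) 0 ∂ℙ) - h / 2| ≤
          C' * (Real.log σ) ^ 4 / σ ^ 3 := by
  refine ⟨Real.exp 1, 1, Real.exp_pos 1, one_pos, ?_⟩
  intro σ h hσ hh0 _ Ω _ _ w ξ hw hξ hindep
  have hσ0 : (0:ℝ) < σ := lt_of_lt_of_le (Real.exp_pos 1) hσ
  set v : ℝ≥0 := Real.toNNReal (σ ^ 2) with hv
  have hσ2 : (0:ℝ) < σ ^ 2 := by positivity
  have hvne : v ≠ 0 := by
    simp only [hv, ne_eq, Real.toNNReal_eq_zero, not_le]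
    exact hσ2
  have hwm : AEMeasurable w ℙ := aemeasurable_of_map_neZero (by rw [hw]; infer_instance)
  have hξm : AEMeasurable ξ ℙ := aemeasurable_of_map_neZero (by rw [hξ]; infer_instance)
  set γ1 : Measure ℝ := gaussianReal 0 1 with hγ1
  set γ2 : Measure ℝ := gaussianReal 0 v with hγ2
  haveI : IsProbabilityMeasure γ1 := by rw [hγ1]; infer_instance
  haveI : IsProbabilityMeasure γ2 := by rw [hγ2]; infer_instance
  set μ : Measure (ℝ × ℝ) := γ1.prod γ2 with hμ
  have hpair : Measure.map (fun ω => (w ω, ξ ω)) ℙ = μ := by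
    have := (indepFun_iff_map_prod_eq_prod_map_map hwm hξm).mp hindep
    rw [hw, hξ] at this
    exact this
  set F : ℝ × ℝ → ℝ := fun p => p.1 * max (p.1 * h + p.2) 0 with hF
  have hFc : Continuous F :=
    continuous_fst.mul
      (Continuous.max ((continuous_fst.mul continuous_const).add continuous_snd)
        continuous_const)
  -- integrability facts
  have hx2γ1 : Integrable (fun x => x ^ 2) γ1 := by
    have := integrable_abs_pow_gauss one_ne_zero 2
    simpa [sq_abs] using this
  have habsγ1 : Integrable (fun x => |x|) γ1 := by
    simpa using integrable_abs_pow_gauss one_ne_zero 1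
  have habsγ2 : Integrable (fun x => |x|) γ2 := by
    simpa using integrable_abs_pow_gauss hvne 1
  have hxγ1 : Integrable (fun x : ℝ => x) γ1 :=
    habsγ1.mono' measurable_id.aestronglyMeasurable
      (Filter.Eventually.of_forall fun x => by simp [Real.norm_eq_abs])
  have hxγ2 : Integrable (fun x : ℝ => x) γ2 :=
    habsγ2.mono' measurable_id.aestronglyMeasurable
      (Filter.Eventually.of_forall fun x => by simp [Real.norm_eq_abs])
  have hsqprod : Integrable (fun p : ℝ × ℝ => p.1 ^ 2) μ := by
    simpa using hx2γ1.mul_prod (integrable_const (1:ℝ))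
  have habsprod : Integrable (fun p : ℝ × ℝ => |p.1| * |p.2|) μ := habsγ1.mul_prod habsγ2
  have hdom : Integrable (fun p : ℝ × ℝ => h * p.1 ^ 2 + |p.1| * |p.2|) μ :=
    (hsqprod.const_mul h).add habsprod
  have hFi : Integrable F μ := by
    refine hdom.mono' hFc.aestronglyMeasurable (Filter.Eventually.of_forall fun p => ?_)
    have h1 : |max (p.1 * h + p.2) 0| ≤ |p.1| * h + |p.2| := by
      have h2 : |max (p.1 * h + p.2) 0| ≤ |p.1 * h + p.2| := by
        rw [abs_of_nonneg (le_max_right _ _)]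
        exact max_le (le_abs_self _) (abs_nonneg _)
      refine h2.trans ((abs_add_le _ _).trans ?_)
      rw [abs_mul, abs_of_nonneg hh0]
    calc ‖F p‖ = |p.1| * |max (p.1 * h + p.2) 0| := by
          rw [Real.norm_eq_abs, hF]; exact abs_mul _ _
      _ ≤ |p.1| * (|p.1| * h + |p.2|) :=
          mul_le_mul_of_nonneg_left h1 (abs_nonneg _)
      _ = h * p.1 ^ 2 + |p.1| * |p.2| := by
          rw [mul_add, ← mul_assoc, ← sq_abs]; ring
  -- symmetry
  have hnegprod : Measure.map (fun p : ℝ × ℝ => (-p.1, -p.2)) μ = μ := by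
    have hmm := Measure.map_prod_map (f := fun x : ℝ => -x) (g := fun x : ℝ => -x) γ1 γ2
      measurable_neg measurable_neg
    rw [hγ1, hγ2, map_neg_gauss, map_neg_gauss] at hmm
    rw [show (fun p : ℝ × ℝ => (-p.1, -p.2))
      = Prod.map (fun x : ℝ => -x) (fun x : ℝ => -x) from rfl]
    exact hmm.symm
  have hnegm : Measurable (fun p : ℝ × ℝ => (-p.1, -p.2)) :=
    measurable_fst.neg.prodMk measurable_snd.neg
  have hGi : Integrable (fun p : ℝ × ℝ => F (-p.1, -p.2)) μ := by
    have hmi : Integrable F (Measure.map (fun p : ℝ × ℝ => (-p.1, -p.2)) μ) := by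
      rw [hnegprod]; exact hFi
    exact (integrable_map_measure hFc.aestronglyMeasurable hnegm.aemeasurable).mp hmi
  have hkey : ∫ p, F p ∂μ = ∫ p, F (-p.1, -p.2) ∂μ := by
    conv_lhs => rw [← hnegprod]
    exact integral_map hnegm.aemeasurable hFc.aestronglyMeasurable
  have hsum : (∫ p, F p ∂μ) + (∫ p, F p ∂μ) = ∫ p, (F p + F (-p.1, -p.2)) ∂μ := by
    rw [integral_add hFi hGi, ← hkey]
  have hptwise : ∀ p : ℝ × ℝ, F p + F (-p.1, -p.2) = h * p.1 ^ 2 + p.1 * p.2 := by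
    intro p
    have e2 := max_zero_sub_max_neg_zero_eq_self (p.1 * h + p.2)
    simp only [hF]
    rw [show (-p.1) * h + (-p.2) = -(p.1 * h + p.2) by ring]
    calc p.1 * max (p.1 * h + p.2) 0 + -p.1 * max (-(p.1 * h + p.2)) 0
        = p.1 * (max (p.1 * h + p.2) 0 - max (-(p.1 * h + p.2)) 0) := by ring
      _ = p.1 * (p.1 * h + p.2) := by rw [e2]
      _ = h * p.1 ^ 2 + p.1 * p.2 := by ring
  have hval : ∫ p, (F p + F (-p.1, -p.2)) ∂μ = h := by
    simp_rw [hptwise]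
    rw [integral_add (hsqprod.const_mul h) (hxγ1.mul_prod hxγ2)]
    have h1 : ∫ p : ℝ × ℝ, h * p.1 ^ 2 ∂μ = h := by
      have hrw : (fun p : ℝ × ℝ => h * p.1 ^ 2)
          = fun p : ℝ × ℝ => (fun x => h * x ^ 2) p.1 * (fun _ : ℝ => (1:ℝ)) p.2 := by
        funext p; simp
      have hip := integral_prod_mul (μ := γ1) (ν := γ2) (fun x : ℝ => h * x ^ 2)
        (fun _ : ℝ => (1:ℝ))
      rw [hμ, hrw, hip, integral_const_mul, hγ1, second_moment_gauss, integral_const]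
      simp
    have h2 : ∫ p : ℝ × ℝ, p.1 * p.2 ∂μ = 0 := by
      have := integral_prod_mul (μ := γ1) (ν := γ2) (fun x : ℝ => x) (fun y : ℝ => y)
      rw [hμ, this, hγ1, hγ2, first_moment_gauss, first_moment_gauss]
      simp
    rw [h1, h2]; ring
  have hI : ∫ ω, w ω * max (w ω * h + ξ ω) 0 ∂ℙ = h / 2 := by
    have hEq : ∫ ω, w ω * max (w ω * h + ξ ω) 0 ∂ℙ = ∫ p, F p ∂μ := by
      rw [← hpair, integral_map (hwm.prodMk hξm) hFc.aestronglyMeasurable]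
    rw [hEq]
    have h2 := hsum.trans hval
    linarith
  rw [hI, sub_self, abs_zero]
  have h1σ : (1:ℝ) ≤ σ := le_trans (by nlinarith [Real.add_one_le_exp (1:ℝ)]) hσ
  have hlog : (0:ℝ) ≤ Real.log σ := Real.log_nonneg h1σ
  positivity
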